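/- Let ℓ ≥ 2, n ≥ ℓ, k ≥ 1, and let s be a positive integer dividing ℓ. Let σ be an ℓ-cycle in the permutations of Fin n. Then, as an identity of integers, s * C_s(σ^{⊙k}) = ∑_{e ∈ divisors of s} μ(s/e) * ∑_{r=0}^{⌊k*e/ℓ⌋} (multichoose e r) * (multichoose (n − ℓ) (k − r*ℓ/e)), where μ is the Möbius function and ℓ/e is an integer since e divides s and s divides ℓ. -/

import Mathlib

/-- The `k`-th symmetric tensor power of a permutation `σ` of `Fin n`: the permutation of
`Sym (Fin n) k` sending a multiset `m` to `Sym.map σ m`. -/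
def Equiv.Perm.symPow {n : ℕ} (σ : Equiv.Perm (Fin n)) (k : ℕ) :
    Equiv.Perm (Sym (Fin n) k) :=
  (Sym.equivCongr σ : Sym (Fin n) k ≃ Sym (Fin n) k)

/-- The number of fixed points of a permutation of a finite type. -/
def fixCount {α : Type*} [Fintype α] [DecidableEq α] (τ : Equiv.Perm α) : ℕ :=
  Fintype.card {x : α // τ x = x}

/-- `cycleCount τ s` is the number of cycles of length `s` in the cycle decomposition of `τ`;
for `s = 1` this is the number of fixed points. -/
def cycleCount {α : Type*} [Fintype α] [DecidableEq α] (τ : Equiv.Perm α) (s : ℕ) : ℕ :=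
  if s = 1 then fixCount τ
  else (τ.cycleFactorsFinset.filter (fun c => c.support.card = s)).card

set_option linter.unusedSectionVars false


open Equiv Finset

variable {α : Type*} [Fintype α] [DecidableEq α]

/-- Multisets on a fintype correspond to their count functions. -/
noncomputable def msEquiv (α : Type*) [Fintype α] [DecidableEq α] : Multiset α ≃ (α → ℕ) :=
  Multiset.toFinsupp.toEquiv.trans Finsupp.equivFunOnFinite

lemma msEquiv_apply (m : Multiset α) (a : α) : msEquiv α m a = m.count a := by
  simp [msEquiv, Finsupp.equivFunOnFinite]

lemma sum_msEquiv (m : Multiset α) : ∑ a, msEquiv α m a = Multiset.card m := by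
  simp only [msEquiv_apply]
  exact Multiset.sum_count_eq_card (fun a _ => Finset.mem_univ a)

lemma map_eq_iff_count (ρ : Equiv.Perm α) (m : Multiset α) :
    m.map ρ = m ↔ ∀ x, m.count (ρ x) = m.count x := by
  constructor
  · intro h x
    conv_lhs => rw [← h]
    exact Multiset.count_map_eq_count' _ _ ρ.injective x
  · intro h
    ext x
    have h1 : m.count (ρ (ρ.symm x)) = m.count (ρ.symm x) := h _
    rw [Equiv.apply_symm_apply] at h1
    calc Multiset.count x (m.map ρ) = Multiset.count (ρ (ρ.symm x)) (m.map ρ) := by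
          rw [Equiv.apply_symm_apply]
      _ = Multiset.count (ρ.symm x) m := Multiset.count_map_eq_count' _ _ ρ.injective _
      _ = Multiset.count x m := h1.symm

/-- Functions with given sum correspond to `Sym`. -/
noncomputable def sumFunEquivSym (α : Type*) [Fintype α] [DecidableEq α] (r : ℕ) :
    {f : α → ℕ // ∑ a, f a = r} ≃ Sym α r :=
  (Equiv.subtypeEquiv (msEquiv α) (fun m => by rw [← sum_msEquiv m])).symm

lemma sym_map_eq_iff (ρ : Equiv.Perm α) {k : ℕ} (m : Sym α k) :
    Sym.map ρ m = m ↔ Multiset.map ρ (m : Multiset α) = (m : Multiset α) := by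
  rw [← Sym.coe_map]
  exact ⟨fun h => congrArg Sym.toMultiset h, fun h => Sym.coe_injective h⟩

/-- Fixed multisets of `Sym.map ρ` correspond to invariant count functions. -/
noncomputable def symFixEquivFun (ρ : Equiv.Perm α) (k : ℕ) :
    {m : Sym α k // Sym.map ρ m = m} ≃
      {f : α → ℕ // (∑ a, f a = k) ∧ ∀ x, f (ρ x) = f x} where
  toFun x := ⟨msEquiv α (x.1 : Multiset α), by
    refine ⟨by rw [sum_msEquiv]; exact x.1.2, fun y => ?_⟩
    simp only [msEquiv_apply]
    exact (map_eq_iff_count ρ _).1 ((sym_map_eq_iff ρ x.1).1 x.2) y⟩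
  invFun f := ⟨⟨(msEquiv α).symm f.1, by
      have := sum_msEquiv ((msEquiv α).symm f.1)
      rw [Equiv.apply_symm_apply] at this
      rw [← this, f.2.1]⟩, by
    refine (sym_map_eq_iff ρ _).2 ?_
    refine (map_eq_iff_count ρ _).2 (fun y => ?_)
    have h1 := msEquiv_apply ((msEquiv α).symm f.1) (ρ y)
    have h2 := msEquiv_apply ((msEquiv α).symm f.1) y
    rw [Equiv.apply_symm_apply] at h1 h2
    show Multiset.count (ρ y) ((msEquiv α).symm f.1) = Multiset.count y ((msEquiv α).symm f.1)
    rw [← h1, ← h2]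
    exact f.2.2 y⟩
  left_inv x := by
    apply Subtype.ext
    apply Sym.coe_injective
    simp
  right_inv f := by
    apply Subtype.ext
    simp

lemma sum_range_mod (g : ℕ → ℕ) (e q : ℕ) :
    ∑ i ∈ range (e * q), g (i % e) = q * ∑ j ∈ range e, g j := by
  induction q with
  | zero => simp
  | succ q ih =>
    rw [Nat.mul_succ, Finset.sum_range_add, ih, Nat.succ_mul]
    congr 1
    refine Finset.sum_congr rfl (fun i hi => ?_)
    rw [Finset.mem_range] at hi
    rw [Nat.mul_add_mod, Nat.mod_eq_of_lt hi]

section Std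

variable {n ℓ e q k : ℕ}

/-- Descent: an invariant function under the standard shifted action only depends on `i % e`
on the first `ℓ` coordinates. -/
lemma invariant_descent (he : 0 < e) (heℓ : e ≤ ℓ) (heD : e ∣ ℓ) (hℓn : ℓ ≤ n)
    (ρ : Equiv.Perm (Fin n))
    (hρ : ∀ x : Fin n, ((ρ x : Fin n) : ℕ) = if (x : ℕ) < ℓ then ((x : ℕ) + e) % ℓ else (x : ℕ))
    (f : Fin n → ℕ) (hf : ∀ x, f (ρ x) = f x) :
    ∀ i (h : i < ℓ), f ⟨i, h.trans_le hℓn⟩ =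
      f ⟨i % e, (Nat.mod_lt i he).trans_le (heℓ.trans hℓn)⟩ := by
  intro i
  induction i using Nat.strong_induction_on with
  | _ i ih =>
    intro h
    by_cases hie : i < e
    · exact congrArg f (Fin.ext (by simp [Nat.mod_eq_of_lt hie]))
    · push_neg at hie
      have hj : i - e < ℓ := by omega
      set x : Fin n := ⟨i - e, hj.trans_le hℓn⟩ with hx
      have hρx : ρ x = ⟨i, h.trans_le hℓn⟩ := by
        apply Fin.ext
        rw [hρ x]
        have hxv : (x : ℕ) = i - e := rfl
        rw [hxv, if_pos hj, show i - e + e = i by omega, Nat.mod_eq_of_lt h]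
      have h1 : f ⟨i, h.trans_le hℓn⟩ = f x := by rw [← hρx, hf]
      have h2 := ih (i - e) (by omega) hj
      have h3 : (i - e) % e = i % e := by
        conv_rhs => rw [show i = (i - e) + e by omega]
        rw [Nat.add_mod_right]
      rw [h1, h2]
      exact congrArg f (Fin.ext (by simp [h3]))

/-- Splitting the sum of `f` over `Fin n` for invariant `f`. -/
lemma sum_eq_decomp (he : 0 < e) (hq : 0 < q) (hℓ : ℓ = e * q) (hℓn : ℓ ≤ n)
    (ρ : Equiv.Perm (Fin n))
    (hρ : ∀ x : Fin n, ((ρ x : Fin n) : ℕ) = if (x : ℕ) < ℓ then ((x : ℕ) + e) % ℓ else (x : ℕ))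
    (f : Fin n → ℕ) (hf : ∀ x, f (ρ x) = f x) :
    ∑ a, f a = q * (∑ j : Fin e, f ⟨j, lt_of_lt_of_le j.2 ((Nat.le_mul_of_pos_right e hq).trans_eq hℓ.symm |>.trans hℓn)⟩)
      + ∑ j : Fin (n - ℓ), f ⟨ℓ + j, by omega⟩ := by
  have heℓ : e ≤ ℓ := (Nat.le_mul_of_pos_right e hq).trans_eq hℓ.symm
  set F : ℕ → ℕ := fun i => if h : i < n then f ⟨i, h⟩ else 0 with hF
  have h0 : ∑ a, f a = ∑ i ∈ range n, F i := by
    rw [← Fin.sum_univ_eq_sum_range]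
    refine Finset.sum_congr rfl (fun x _ => ?_)
    simp [hF, x.2]
  have h1 : ∑ i ∈ range n, F i = ∑ i ∈ range ℓ, F i + ∑ i ∈ range (n - ℓ), F (ℓ + i) := by
    conv_lhs => rw [show n = ℓ + (n - ℓ) by omega]
    rw [Finset.sum_range_add]
  have h2 : ∑ i ∈ range ℓ, F i = ∑ i ∈ range ℓ, F (i % e) := by
    refine Finset.sum_congr rfl (fun i hi => ?_)
    rw [Finset.mem_range] at hi
    have := invariant_descent he heℓ ⟨q, hℓ⟩ hℓn ρ hρ f hf i hi
    simp only [hF]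
    rw [dif_pos (hi.trans_le hℓn), dif_pos ((Nat.mod_lt i he).trans_le (heℓ.trans hℓn))]
    exact this
  have h3 : ∑ i ∈ range ℓ, F (i % e) = q * ∑ j ∈ range e, F j := by
    rw [hℓ]; exact sum_range_mod F e q
  have h4 : ∑ j ∈ range e, F j = ∑ j : Fin e, f ⟨j, lt_of_lt_of_le j.2 (heℓ.trans hℓn)⟩ := by
    rw [← Fin.sum_univ_eq_sum_range]
    refine Finset.sum_congr rfl (fun j _ => ?_)
    simp only [hF]
    rw [dif_pos (lt_of_lt_of_le j.2 (heℓ.trans hℓn))]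
  have h5 : ∑ i ∈ range (n - ℓ), F (ℓ + i) = ∑ j : Fin (n - ℓ), f ⟨ℓ + j, by omega⟩ := by
    rw [← Fin.sum_univ_eq_sum_range (fun i => F (ℓ + i))]
    refine Finset.sum_congr rfl (fun j _ => ?_)
    simp only [hF]
    rw [dif_pos (by omega)]
  rw [h0, h1, h2, h3, h4, h5]

end Std

section Std2

variable {n ℓ e q k : ℕ}

/-- Invariant functions with sum `k` correspond to pairs. -/
noncomputable def invFunEquivPair (he : 0 < e) (hq : 0 < q) (hℓ : ℓ = e * q) (hℓn : ℓ ≤ n)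
    (ρ : Equiv.Perm (Fin n))
    (hρ : ∀ x : Fin n, ((ρ x : Fin n) : ℕ) = if (x : ℕ) < ℓ then ((x : ℕ) + e) % ℓ else (x : ℕ)) :
    {f : Fin n → ℕ // (∑ a, f a = k) ∧ ∀ x, f (ρ x) = f x} ≃
      {p : (Fin e → ℕ) × (Fin (n - ℓ) → ℕ) // q * (∑ j, p.1 j) + ∑ j, p.2 j = k} where
  toFun f := ⟨(fun j => f.1 ⟨j, by have := Nat.le_mul_of_pos_right e hq; omega⟩,
      fun j => f.1 ⟨ℓ + j, by omega⟩), by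
    rw [← sum_eq_decomp he hq hℓ hℓn ρ hρ f.1 f.2.2]
    exact f.2.1⟩
  invFun p := ⟨fun x => if h : (x : ℕ) < ℓ then p.1.1 ⟨(x : ℕ) % e, Nat.mod_lt _ he⟩
      else p.1.2 ⟨(x : ℕ) - ℓ, by omega⟩, by
    set I : Fin n → ℕ := fun x => if h : (x : ℕ) < ℓ then p.1.1 ⟨(x : ℕ) % e, Nat.mod_lt _ he⟩
      else p.1.2 ⟨(x : ℕ) - ℓ, by omega⟩ with hI
    have hinv : ∀ x, I (ρ x) = I x := by
      intro x
      by_cases hx : (x : ℕ) < ℓ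
      · have hρx : ((ρ x : Fin n) : ℕ) = ((x : ℕ) + e) % ℓ := by rw [hρ x, if_pos hx]
        have hρxl : ((ρ x : Fin n) : ℕ) < ℓ := by rw [hρx]; exact Nat.mod_lt _ (by omega)
        simp only [hI]
        rw [dif_pos hρxl, dif_pos hx]
        refine congrArg _ (Fin.ext ?_)
        show ((ρ x : Fin n) : ℕ) % e = (x : ℕ) % e
        rw [hρx, Nat.mod_mod_of_dvd _ ⟨q, hℓ⟩, Nat.add_mod_right]
      · have hρx : ρ x = x := Fin.ext (by rw [hρ x, if_neg hx])
        rw [hρx]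
    refine ⟨?_, hinv⟩
    rw [sum_eq_decomp he hq hℓ hℓn ρ hρ I hinv]
    have hA : ∀ j : Fin e, I ⟨j, by have := Nat.le_mul_of_pos_right e hq; omega⟩ = p.1.1 j := by
      intro j
      simp only [hI]
      rw [dif_pos (show (j : ℕ) < ℓ by have := Nat.le_mul_of_pos_right e hq; omega)]
      exact congrArg p.1.1 (Fin.ext (Nat.mod_eq_of_lt j.2))
    have hB : ∀ j : Fin (n - ℓ), I ⟨ℓ + j, by omega⟩ = p.1.2 j := by
      intro j
      simp only [hI]
      rw [dif_neg (by omega)]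
      exact congrArg p.1.2 (Fin.ext (by simp))
    rw [Finset.sum_congr rfl (fun j _ => hA j), Finset.sum_congr rfl (fun j _ => hB j)]
    exact p.2⟩
  left_inv f := by
    apply Subtype.ext
    funext x
    by_cases hx : (x : ℕ) < ℓ
    · simp only []
      rw [dif_pos hx]
      have heℓ : e ≤ ℓ := (Nat.le_mul_of_pos_right e hq).trans_eq hℓ.symm
      have := invariant_descent he heℓ ⟨q, hℓ⟩ hℓn ρ hρ f.1 f.2.2 (x : ℕ) hx
      rw [show (⟨(x : ℕ), hx.trans_le hℓn⟩ : Fin n) = x from Fin.ext rfl] at this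
      exact this.symm
    · simp only []
      rw [dif_neg hx]
      exact congrArg f.1 (Fin.ext (by simp; omega))
  right_inv p := by
    apply Subtype.ext
    apply Prod.ext
    · funext j
      simp only []
      rw [dif_pos (show (j : ℕ) < ℓ by have := Nat.le_mul_of_pos_right e hq; omega)]
      exact congrArg p.1.1 (Fin.ext (Nat.mod_eq_of_lt j.2))
    · funext j
      simp only []
      rw [dif_neg (by omega)]
      exact congrArg p.1.2 (Fin.ext (by simp))

end Std2

/-- The pair type split into fibers by the sum of the first component. -/
noncomputable def pairEquivSigma (m e q k : ℕ) (hq : 0 < q) :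
    {p : (Fin e → ℕ) × (Fin m → ℕ) // q * (∑ j, p.1 j) + ∑ j, p.2 j = k} ≃
      Σ r : Fin (k / q + 1), Sym (Fin e) (r : ℕ) × Sym (Fin m) (k - q * (r : ℕ)) := by
  refine Equiv.trans (Equiv.sigmaFiberEquiv (f := fun p :
      {p : (Fin e → ℕ) × (Fin m → ℕ) // q * (∑ j, p.1 j) + ∑ j, p.2 j = k} =>
      (⟨∑ j, p.1.1 j, ?_⟩ : Fin (k / q + 1)))).symm (Equiv.sigmaCongrRight (fun r => ?_))
  · have h1 : q * (∑ j, p.1.1 j) ≤ k := Nat.le.intro p.2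
    have h2 : (∑ j, p.1.1 j) ≤ k / q := Nat.le_div_iff_mul_le hq |>.2 (by rwa [mul_comm] at h1)
    omega
  · refine Equiv.trans ?_ (Equiv.prodCongr (sumFunEquivSym (Fin e) (r : ℕ))
      (sumFunEquivSym (Fin m) (k - q * (r : ℕ))))
    refine ⟨fun t => (⟨t.1.1.1, ?_⟩, ⟨t.1.1.2, ?_⟩), fun gh => ⟨⟨(gh.1.1, gh.2.1), ?_⟩, ?_⟩, ?_, ?_⟩
    · exact congrArg Fin.val t.2
    · have h1 := t.1.2
      have h2 : (∑ j, t.1.1.1 j) = (r : ℕ) := congrArg Fin.val t.2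
      rw [h2] at h1
      exact (Nat.eq_sub_of_add_eq' h1)
    · have hrk : (r : ℕ) * q ≤ k := by
        refine (Nat.le_div_iff_mul_le hq).1 ?_
        omega
      have h2 := gh.1.2
      have h3 := gh.2.2
      show q * (∑ j, gh.1.1 j) + ∑ j, gh.2.1 j = k
      rw [h2, h3, mul_comm]
      omega
    · apply Fin.ext
      exact gh.1.2
    · intro t
      apply Subtype.ext
      apply Subtype.ext
      rfl
    · intro gh
      rfl

lemma fixCount_symPow_std {n ℓ e q k : ℕ} (he : 0 < e) (hq : 0 < q) (hℓ : ℓ = e * q)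
    (hℓn : ℓ ≤ n) (ρ : Equiv.Perm (Fin n))
    (hρ : ∀ x : Fin n, ((ρ x : Fin n) : ℕ) = if (x : ℕ) < ℓ then ((x : ℕ) + e) % ℓ else (x : ℕ)) :
    fixCount (ρ.symPow k) =
      ∑ r ∈ range (k / q + 1), Nat.multichoose e r * Nat.multichoose (n - ℓ) (k - q * r) := by
  classical
  have key : ∀ m : Sym (Fin n) k, ρ.symPow k m = Sym.map ρ m := fun m => rfl
  have E0 : {x : Sym (Fin n) k // ρ.symPow k x = x} ≃ {m : Sym (Fin n) k // Sym.map ρ m = m} :=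
    Equiv.subtypeEquivRight (fun m => by rw [key])
  have E := (E0.trans (symFixEquivFun ρ k)).trans
    ((invFunEquivPair he hq hℓ hℓn ρ hρ).trans (pairEquivSigma (n - ℓ) e q k hq))
  rw [fixCount, Fintype.card_congr E, Fintype.card_sigma]
  rw [Fin.sum_univ_eq_sum_range
    (fun r => Fintype.card (Sym (Fin e) r × Sym (Fin (n - ℓ)) (k - q * r)))]
  refine Finset.sum_congr rfl (fun r _ => ?_)
  rw [Fintype.card_prod, Sym.card_sym_eq_multichoose, Sym.card_sym_eq_multichoose,
    Fintype.card_fin, Fintype.card_fin]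


open Equiv Finset

lemma fixCount_eq_card_filter {α : Type*} [Fintype α] [DecidableEq α] (τ : Equiv.Perm α) :
    fixCount τ = (univ.filter (fun x => τ x = x)).card := by
  simp [fixCount, Fintype.card_subtype]

lemma fixCount_pow {α : Type*} [Fintype α] [DecidableEq α] (τ : Equiv.Perm α) (e : ℕ)
    (he : 0 < e) :
    fixCount (τ ^ e) = ∑ d ∈ e.divisors, d * cycleCount τ d := by
  classical
  have h1 : (1 : ℕ) ∈ e.divisors := Nat.one_mem_divisors.2 he.ne'
  rw [← Finset.insert_erase h1, Finset.sum_insert (Finset.notMem_erase _ _)]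
  have hcc1 : cycleCount τ 1 = fixCount τ := if_pos rfl
  rw [hcc1, one_mul]
  -- split fixed points of τ^e into those in support τ and those not
  rw [fixCount_eq_card_filter]
  have hsplit := Finset.card_filter_add_card_filter_not
    (s := univ.filter (fun x => (τ ^ e) x = x)) (p := fun x => x ∈ τ.support)
  rw [← hsplit]
  have hout : (univ.filter (fun x => (τ ^ e) x = x)).filter (fun x => ¬ x ∈ τ.support)
      = univ.filter (fun x => τ x = x) := by
    ext x
    simp only [Finset.mem_filter, Finset.mem_univ, true_and, Equiv.Perm.mem_support, not_not]
    constructor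
    · rintro ⟨-, h⟩; exact h
    · intro h; exact ⟨Function.IsFixedPt.perm_pow h e, h⟩
  have hin : (univ.filter (fun x => (τ ^ e) x = x)).filter (fun x => x ∈ τ.support)
      = (τ.cycleFactorsFinset.filter (fun c => c.support.card ∣ e)).biUnion Equiv.Perm.support := by
    ext x
    simp only [Finset.mem_filter, Finset.mem_univ, true_and, Finset.mem_biUnion]
    constructor
    · rintro ⟨hfix, hx⟩
      refine ⟨τ.cycleOf x, ⟨Equiv.Perm.cycleOf_mem_cycleFactorsFinset_iff.2 hx, ?_⟩, ?_⟩
      · have hcyc : (τ.cycleOf x).IsCycle := Equiv.Perm.isCycle_cycleOf τ (Equiv.Perm.mem_support.1 hx)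
        rw [← hcyc.orderOf, orderOf_dvd_iff_pow_eq_one]
        rw [hcyc.pow_eq_one_iff' (x := x)]
        · rw [Equiv.Perm.cycleOf_pow_apply_self]; exact hfix
        · rw [Equiv.Perm.cycleOf_apply_self]; exact Equiv.Perm.mem_support.1 hx
      · rw [Equiv.Perm.mem_support, Equiv.Perm.cycleOf_apply_self]
        exact Equiv.Perm.mem_support.1 hx
    · rintro ⟨c, ⟨hcf, hcd⟩, hxc⟩
      have hcx : c = τ.cycleOf x := Equiv.Perm.cycle_is_cycleOf hxc hcf
      have hxs : x ∈ τ.support := by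
        rw [← Equiv.Perm.cycleOf_mem_cycleFactorsFinset_iff]; rwa [← hcx]
      refine ⟨?_, hxs⟩
      have hcyc : c.IsCycle := (Equiv.Perm.mem_cycleFactorsFinset_iff.1 hcf).1
      have : c ^ e = 1 := by
        rw [← orderOf_dvd_iff_pow_eq_one, hcyc.orderOf]; exact hcd
      have := congrFun (congrArg (fun p => (p : Equiv.Perm α) ∘ (·)) this) x
      simp only [Equiv.Perm.coe_one, Function.comp, id] at this
      calc (τ ^ e) x = ((τ.cycleOf x) ^ e) x := (Equiv.Perm.cycleOf_pow_apply_self τ x e).symm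
        _ = (c ^ e) x := by rw [← hcx]
        _ = x := this
  rw [hout, hin, ← fixCount_eq_card_filter, Finset.card_biUnion, add_comm]
  · congr 1
    have hmaps : ∀ c ∈ τ.cycleFactorsFinset.filter (fun c => c.support.card ∣ e),
        c.support.card ∈ e.divisors.erase 1 := by
      intro c hc
      rw [Finset.mem_filter] at hc
      refine Finset.mem_erase.2 ⟨?_, Nat.mem_divisors.2 ⟨hc.2, he.ne'⟩⟩
      have := (Equiv.Perm.mem_cycleFactorsFinset_iff.1 hc.1).1.two_le_card_support
      omega
    rw [← Finset.sum_fiberwise_of_maps_to hmaps (fun c => c.support.card)]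
    refine Finset.sum_congr rfl (fun d hd => ?_)
    rw [Finset.mem_erase, Nat.mem_divisors] at hd
    simp only [cycleCount, if_neg hd.1]
    have : (τ.cycleFactorsFinset.filter (fun c => c.support.card ∣ e)).filter
        (fun c => c.support.card = d) = τ.cycleFactorsFinset.filter (fun c => c.support.card = d) := by
      ext c
      simp only [Finset.mem_filter, Finset.filter_filter]
      constructor
      · rintro ⟨h1, -, h2⟩; exact ⟨h1, h2⟩
      · rintro ⟨h1, h2⟩; exact ⟨h1, h2 ▸ hd.2.1, h2⟩
    rw [this, Finset.sum_congr rfl (fun c hc => (Finset.mem_filter.1 hc).2), Finset.sum_const,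
      smul_eq_mul, mul_comm]
  · intro c hc c' hc' hne
    have := Equiv.Perm.cycleFactorsFinset_pairwise_disjoint τ
      (Finset.mem_filter.1 hc).1 (Finset.mem_filter.1 hc').1 hne
    exact Equiv.Perm.Disjoint.disjoint_support this

open ArithmeticFunction in
lemma smul_cycleCount_eq {α : Type*} [Fintype α] [DecidableEq α] (τ : Equiv.Perm α) (s : ℕ)
    (hs : 0 < s) :
    (s : ℤ) * (cycleCount τ s : ℤ) =
      ∑ e ∈ s.divisors, (moebius (s / e)) * (fixCount (τ ^ e) : ℤ) := by
  have key := (ArithmeticFunction.sum_eq_iff_sum_smul_moebius_eq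
    (f := fun d => (d : ℤ) * (cycleCount τ d : ℤ))
    (g := fun n => (fixCount (τ ^ n) : ℤ))).1 ?_ s hs
  · rw [← key, Nat.sum_divisorsAntidiagonal' (f := fun a b => (moebius a) • ((fixCount (τ ^ b) : ℤ)))]
    simp [smul_eq_mul]
  · intro n hn
    rw [fixCount_pow τ n hn]
    push_cast
    rfl


open Equiv Finset Equiv.Perm

lemma symPow_mul {n : ℕ} (σ τ : Equiv.Perm (Fin n)) (k : ℕ) :
    (σ * τ).symPow k = σ.symPow k * τ.symPow k := by
  apply Equiv.Perm.ext; intro m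
  show Sym.map (σ * τ) m = Sym.map σ (Sym.map τ m)
  rw [Sym.map_map]
  rfl

lemma symPow_one {n : ℕ} (k : ℕ) : (1 : Equiv.Perm (Fin n)).symPow k = 1 := by
  apply Equiv.Perm.ext; intro m
  show Sym.map (1 : Equiv.Perm (Fin n)) m = m
  apply Sym.ext
  rw [Sym.coe_map]
  simp

lemma symPow_pow {n : ℕ} (σ : Equiv.Perm (Fin n)) (k e : ℕ) :
    (σ ^ e).symPow k = (σ.symPow k) ^ e := by
  induction e with
  | zero => simpa using symPow_one k
  | succ e ih => rw [pow_succ, pow_succ, symPow_mul, ih]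

lemma symPow_inv {n : ℕ} (σ : Equiv.Perm (Fin n)) (k : ℕ) :
    (σ⁻¹).symPow k = (σ.symPow k)⁻¹ := by
  rw [eq_inv_iff_mul_eq_one, ← symPow_mul, inv_mul_cancel, symPow_one]

lemma fixCount_conj {α : Type*} [Fintype α] [DecidableEq α] (π τ : Equiv.Perm α) :
    fixCount (π * τ * π⁻¹) = fixCount τ := by
  apply Fintype.card_congr
  refine ⟨fun x => ⟨π⁻¹ x.1, ?_⟩, fun y => ⟨π y.1, ?_⟩, ?_, ?_⟩
  · have hx := x.2
    simp only [Equiv.Perm.mul_apply] at hx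
    have := congrArg (⇑π⁻¹) hx
    simpa using this
  · have hy := y.2
    simp only [Equiv.Perm.mul_apply]
    simp [hy]
  · intro x; apply Subtype.ext; simp
  · intro y; apply Subtype.ext; simp

lemma coe_cycleRange_apply_of_le {m : ℕ} (i j : Fin (m + 1)) (h : (j : ℕ) ≤ (i : ℕ)) :
    ((Fin.cycleRange i) j : ℕ) = ((j : ℕ) + 1) % ((i : ℕ) + 1) := by
  rw [Fin.coe_cycleRange_of_le (Fin.le_def.2 h)]
  by_cases hj : j = i
  · rw [if_pos hj, hj, Nat.mod_self]
  · rw [if_neg hj]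
    have : (j : ℕ) < (i : ℕ) := lt_of_le_of_ne h (fun hc => hj (Fin.ext hc))
    rw [Nat.mod_eq_of_lt (by omega)]

lemma coe_cycleRange_pow {m : ℕ} (i : Fin (m + 1)) (e : ℕ) (x : Fin (m + 1)) :
    (((Fin.cycleRange i) ^ e) x : ℕ) =
      if (x : ℕ) ≤ (i : ℕ) then ((x : ℕ) + e) % ((i : ℕ) + 1) else (x : ℕ) := by
  induction e with
  | zero =>
    simp only [pow_zero, Equiv.Perm.coe_one, id_eq]
    by_cases hx : (x : ℕ) ≤ (i : ℕ)
    · rw [if_pos hx]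
      have h0 : ((x : ℕ) + 0) % ((i : ℕ) + 1) = (x : ℕ) := by
        rw [Nat.add_zero]
        exact Nat.mod_eq_of_lt (by omega)
      omega
    · rw [if_neg hx]
  | succ e ih =>
    rw [pow_succ', Equiv.Perm.mul_apply]
    by_cases hx : (x : ℕ) ≤ (i : ℕ)
    · rw [if_pos hx] at ih ⊢
      have hy : ((((Fin.cycleRange i) ^ e) x : Fin (m+1)) : ℕ) ≤ (i : ℕ) := by
        rw [ih]; have := Nat.mod_lt ((x : ℕ) + e) (show 0 < (i:ℕ)+1 by omega); omega
      rw [coe_cycleRange_apply_of_le _ _ hy, ih, Nat.mod_add_mod, ← Nat.add_assoc]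
    · rw [if_neg hx] at ih ⊢
      have hy : ((Fin.cycleRange i) ^ e) x = x := Fin.ext ih
      rw [hy, Fin.cycleRange_of_gt (Fin.lt_def.2 (by omega))]


lemma fixCount_pow_symPow_cycle {ℓ m k e : ℕ} (hℓ : 2 ≤ ℓ) (hn : ℓ ≤ m + 1)
    (he : 0 < e) (heℓ : e ∣ ℓ) (σ : Equiv.Perm (Fin (m + 1))) (hc : σ.IsCycle)
    (hsupp : σ.support.card = ℓ) :
    fixCount ((σ.symPow k) ^ e) =
      ∑ r ∈ Finset.range (k * e / ℓ + 1),
        Nat.multichoose e r * Nat.multichoose (m + 1 - ℓ) (k - r * ℓ / e) := by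
  classical
  obtain ⟨q, hℓq⟩ := heℓ
  have hq : 0 < q := by
    rcases Nat.eq_zero_or_pos q with h | h
    · subst h; omega
    · exact h
  set i₀ : Fin (m + 1) := ⟨ℓ - 1, by omega⟩ with hi₀
  have h0 : i₀ ≠ 0 := by
    intro h
    have h2 : (i₀ : ℕ) = 0 := congrArg Fin.val h
    have h3 : (i₀ : ℕ) = ℓ - 1 := rfl
    omega
  have hc₀ : (Fin.cycleRange i₀).IsCycle := Fin.isCycle_cycleRange h0
  have hsupp₀ : (Fin.cycleRange i₀).support.card = ℓ := by
    have h2 := Fin.cycleType_cycleRange h0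
    rw [hc₀.cycleType] at h2
    have h4 : (Fin.cycleRange i₀).support.card = (i₀ : ℕ) + 1 := by
      have h2' : ({(Fin.cycleRange i₀).support.card} : Multiset ℕ) = {(i₀ : ℕ) + 1} := by
        exact_mod_cast h2
      exact Multiset.singleton_inj.1 h2'
    have h3 : (i₀ : ℕ) = ℓ - 1 := rfl
    omega
  have hconj : IsConj (Fin.cycleRange i₀) σ := hc₀.isConj hc (by rw [hsupp₀, hsupp])
  obtain ⟨π, hπ⟩ := isConj_iff.1 hconj
  have hρ : ∀ x : Fin (m + 1), (((Fin.cycleRange i₀) ^ e) x : ℕ) =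
      if (x : ℕ) < ℓ then ((x : ℕ) + e) % ℓ else (x : ℕ) := by
    intro x
    have h1 := coe_cycleRange_pow i₀ e x
    have hiv : (i₀ : ℕ) = ℓ - 1 := rfl
    rw [hiv, show ℓ - 1 + 1 = ℓ by omega] at h1
    rw [h1]
    by_cases hx : (x : ℕ) < ℓ
    · rw [if_pos (by omega), if_pos hx]
    · rw [if_neg (by omega), if_neg hx]
  have key := fixCount_symPow_std (k := k) he hq hℓq hn ((Fin.cycleRange i₀) ^ e) hρ
  have hchain : fixCount ((σ.symPow k) ^ e) =
      fixCount (((Fin.cycleRange i₀) ^ e).symPow k) := by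
    rw [← symPow_pow, ← hπ, conj_pow, symPow_mul, symPow_mul, symPow_inv, fixCount_conj]
  rw [hchain, key]
  have hK : k * e / ℓ = k / q := by
    rw [hℓq, mul_comm k e, Nat.mul_div_mul_left _ _ he]
  rw [hK]
  refine Finset.sum_congr rfl (fun r _ => ?_)
  have hr : r * ℓ / e = q * r := by
    rw [hℓq, show r * (e * q) = e * (q * r) by ring, Nat.mul_div_cancel_left _ he]
  rw [hr]

/-- Closed form for the number of `s`-cycles of the symmetric tensor power of an `ℓ`-cycle in
`Fin n`, for `s ∣ ℓ`. -/
theorem cycleCount_symPow_cycle_closedForm (ℓ n k s : ℕ) (hℓ : 2 ≤ ℓ) (hn : ℓ ≤ n)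
    (hk : 1 ≤ k) (hs1 : 0 < s) (hsl : s ∣ ℓ)
    (σ : Equiv.Perm (Fin n)) (hc : σ.IsCycle) (hsupp : σ.support.card = ℓ) :
    (s : ℤ) * (cycleCount (σ.symPow k) s : ℤ) =
      ∑ e ∈ s.divisors, (ArithmeticFunction.moebius (s / e)) *
        ∑ r ∈ Finset.range (k * e / ℓ + 1),
          (Nat.multichoose e r : ℤ) * (Nat.multichoose (n - ℓ) (k - r * ℓ / e) : ℤ) := by
  classical
  obtain ⟨m, rfl⟩ : ∃ m, n = m + 1 := ⟨n - 1, by omega⟩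
  rw [smul_cycleCount_eq (σ.symPow k) s hs1]
  refine Finset.sum_congr rfl (fun e hee => ?_)
  rw [Nat.mem_divisors] at hee
  have he : 0 < e := Nat.pos_of_dvd_of_pos hee.1 hs1
  congr 1
  rw [fixCount_pow_symPow_cycle hℓ hn he (hee.1.trans hsl) σ hc hsupp]
  push_cast
  rfl
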